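/- For every integer n ≥ 1, the Fibonacci number F_n equals the alternating sum over all integers k of (-1)^k times the binomial coefficient C(n-1, floor((n-1-5k)/2)). -/
import Mathlib


/-- Binomial coefficient `C(m, j)` with integer lower index, zero when `j < 0`. -/
def icho (m : ℕ) (j : ℤ) : ℤ := if 0 ≤ j then (m.choose j.toNat : ℤ) else 0

lemma icho_neg (m : ℕ) (j : ℤ) (h : j < 0) : icho m j = 0 := if_neg (by omega)

lemma icho_gt (m : ℕ) (j : ℤ) (h : (m : ℤ) < j) : icho m j = 0 := by
  unfold icho
  rw [if_pos (by omega), Nat.choose_eq_zero_of_lt (by omega)]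
  norm_num

lemma icho_symm (m : ℕ) (j : ℤ) : icho m j = icho m ((m : ℤ) - j) := by
  rcases lt_or_ge j 0 with h | h
  · rw [icho_neg m j h, icho_gt m _ (by omega)]
  rcases le_or_gt j (m : ℤ) with h2 | h2
  · unfold icho
    rw [if_pos h, if_pos (by omega)]
    have : ((m : ℤ) - j).toNat = m - j.toNat := by omega
    rw [this, Nat.choose_symm (by omega)]
  · rw [icho_gt m j h2, icho_neg m _ (by omega)]

lemma icho_pascal (m : ℕ) (j : ℤ) : icho (m + 1) j = icho m j + icho m (j - 1) := by
  rcases lt_or_ge j 0 with h | h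
  · rw [icho_neg _ _ h, icho_neg _ _ h, icho_neg _ _ (by omega)]; ring
  rcases eq_or_lt_of_le h with h0 | h0
  · rw [← h0]; simp [icho]
  · unfold icho
    rw [if_pos h, if_pos h, if_pos (by omega)]
    have h1 : j.toNat = (j - 1).toNat + 1 := by omega
    rw [h1, Nat.choose_succ_succ']
    push_cast; ring

lemma neg_one_pow_natAbs_neg (k : ℤ) : (-1 : ℤ) ^ (-k).natAbs = (-1 : ℤ) ^ k.natAbs := by
  rw [Int.natAbs_neg]

lemma neg_one_pow_natAbs_add_one (k : ℤ) :
    (-1 : ℤ) ^ (k + 1).natAbs = -(-1 : ℤ) ^ k.natAbs := by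
  rcases Int.even_or_odd k with he | ho
  · have h1 : Even k.natAbs := Int.natAbs_even.mpr he
    have h2 : Odd (k + 1).natAbs := Int.natAbs_odd.mpr (he.add_one)
    rw [h1.neg_one_pow, h2.neg_one_pow]
  · have h1 : Odd k.natAbs := Int.natAbs_odd.mpr ho
    have h2 : Even (k + 1).natAbs := Int.natAbs_even.mpr (by
      rcases ho with ⟨t, ht⟩; exact ⟨t + 1, by omega⟩)
    rw [h1.neg_one_pow, h2.neg_one_pow]; ring

/-- The generic alternating sum. -/
noncomputable def Fsum (c : ℤ) (p : ℕ) : ℤ :=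
  ∑ᶠ k : ℤ, (-1 : ℤ) ^ k.natAbs * icho p ((c - 5 * k).fdiv 2)

lemma term_zero (p : ℕ) (c k : ℤ) (h : c < 5 * k ∨ 5 * k < c - 2 * p - 1) :
    (-1 : ℤ) ^ k.natAbs * icho p ((c - 5 * k).fdiv 2) = 0 := by
  rw [Int.fdiv_eq_ediv_of_nonneg _ (by norm_num)]
  rcases h with h | h
  · rw [icho_neg p _ (by omega), mul_zero]
  · rw [icho_gt p _ (by omega), mul_zero]

lemma support_subset (p : ℕ) (c : ℤ) (a b : ℤ) (ha : 5 * a ≤ c - 2 * p - 1) (hb : c ≤ 5 * b) :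
    (Function.support fun k : ℤ => (-1 : ℤ) ^ k.natAbs * icho p ((c - 5 * k).fdiv 2)) ⊆
      ↑(Finset.Icc a b) := by
  intro k hk
  simp only [Function.mem_support] at hk
  simp only [Finset.coe_Icc, Set.mem_Icc]
  by_contra hc
  push_neg at hc
  apply hk
  apply term_zero
  rcases le_or_gt a k with h1 | h1
  · left; have := hc h1; omega
  · right; omega

lemma support_finite (p : ℕ) (c : ℤ) :
    (Function.support fun k : ℤ => (-1 : ℤ) ^ k.natAbs * icho p ((c - 5 * k).fdiv 2)).Finite :=
  Set.Finite.subset (Finset.Icc (-(c.natAbs : ℤ) - 2 * p - 1) ((c.natAbs : ℤ) + 2 * p + 1)).finite_toSet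
    (support_subset p c _ _ (by omega) (by omega))

lemma Fsum_eq_sum (c : ℤ) (p : ℕ) (a b : ℤ) (ha : 5 * a ≤ c - 2 * p - 1) (hb : c ≤ 5 * b) :
    Fsum c p = ∑ k ∈ Finset.Icc a b, (-1 : ℤ) ^ k.natAbs * icho p ((c - 5 * k).fdiv 2) :=
  finsum_eq_finset_sum_of_support_subset _ (support_subset p c a b ha hb)

/-- Reflection: replacing `c` by `2p+1-c`. -/
lemma Fsum_reflect (c : ℤ) (p : ℕ) : Fsum c p = Fsum (2 * p + 1 - c) p := by
  unfold Fsum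
  have h1 : ∀ k : ℤ, (-1 : ℤ) ^ k.natAbs * icho p ((c - 5 * k).fdiv 2) =
      (-1 : ℤ) ^ (-k).natAbs * icho p ((2 * (p : ℤ) + 1 - c - 5 * (-k)).fdiv 2) := by
    intro k
    rw [Int.natAbs_neg, icho_symm p ((c - 5 * k).fdiv 2)]
    congr 2
    rw [Int.fdiv_eq_ediv_of_nonneg _ (by norm_num), Int.fdiv_eq_ediv_of_nonneg _ (by norm_num)]
    omega
  simp_rw [h1]
  exact finsum_comp_equiv (Equiv.neg ℤ)
    (f := fun k : ℤ => (-1 : ℤ) ^ k.natAbs * icho p ((2 * (p : ℤ) + 1 - c - 5 * k).fdiv 2))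

/-- Shift: replacing `c` by `c - 5` changes the sign. -/
lemma Fsum_shift (c : ℤ) (p : ℕ) : Fsum c p = -Fsum (c - 5) p := by
  unfold Fsum
  have h1 : ∀ k : ℤ, (-1 : ℤ) ^ (k + 1).natAbs * icho p ((c - 5 * (k + 1)).fdiv 2) =
      -((-1 : ℤ) ^ k.natAbs * icho p ((c - 5 - 5 * k).fdiv 2)) := by
    intro k
    rw [neg_one_pow_natAbs_add_one]
    have : c - 5 * (k + 1) = c - 5 - 5 * k := by ring
    rw [this]; ring
  have h2 : (∑ᶠ k : ℤ, (-1 : ℤ) ^ k.natAbs * icho p ((c - 5 * k).fdiv 2)) =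
      ∑ᶠ k : ℤ, (-1 : ℤ) ^ (k + 1).natAbs * icho p ((c - 5 * (k + 1)).fdiv 2) :=
    (finsum_comp_equiv (Equiv.addRight (1 : ℤ))).symm
  rw [h2]
  simp_rw [h1]
  rw [← finsum_neg_distrib]

lemma Fsum_vanish (p : ℕ) : Fsum ((p : ℤ) - 2) p = 0 := by
  have h1 := Fsum_reflect ((p : ℤ) - 2) p
  have h2 := Fsum_shift (2 * (p : ℤ) + 1 - ((p : ℤ) - 2)) p
  have h3 : 2 * (p : ℤ) + 1 - ((p : ℤ) - 2) - 5 = (p : ℤ) - 2 := by ring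
  rw [h3] at h2
  omega

lemma Fsum_pascal (c : ℤ) (p : ℕ) : Fsum c (p + 1) = Fsum c p + Fsum (c - 2) p := by
  unfold Fsum
  have h1 : ∀ k : ℤ, (-1 : ℤ) ^ k.natAbs * icho (p + 1) ((c - 5 * k).fdiv 2) =
      (-1 : ℤ) ^ k.natAbs * icho p ((c - 5 * k).fdiv 2) +
      (-1 : ℤ) ^ k.natAbs * icho p ((c - 2 - 5 * k).fdiv 2) := by
    intro k
    rw [icho_pascal]
    have : (c - 5 * k).fdiv 2 - 1 = (c - 2 - 5 * k).fdiv 2 := by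
      rw [Int.fdiv_eq_ediv_of_nonneg _ (by norm_num), Int.fdiv_eq_ediv_of_nonneg _ (by norm_num)]; omega
    rw [this]; ring
  simp_rw [h1]
  exact finsum_add_distrib (support_finite p c) (support_finite p (c - 2))

lemma Fsum_rec (m : ℕ) : Fsum ((m : ℤ) + 2) (m + 2) = Fsum ((m : ℤ) + 1) (m + 1) + Fsum (m : ℤ) m := by
  have h1 : Fsum ((m : ℤ) + 2) (m + 2) =
      Fsum ((m : ℤ) + 2) (m + 1) + Fsum (m : ℤ) (m + 1) := by
    have := Fsum_pascal ((m : ℤ) + 2) (m + 1)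
    have e : (m : ℤ) + 2 - 2 = (m : ℤ) := by ring
    rw [e] at this
    exact this
  have h2 : Fsum ((m : ℤ) + 2) (m + 1) = Fsum ((m : ℤ) + 1) (m + 1) := by
    have := Fsum_reflect ((m : ℤ) + 2) (m + 1)
    have e : 2 * ((m : ℤ) + 1) + 1 - ((m : ℤ) + 2) = (m : ℤ) + 1 := by ring
    rw [show (2 * ((m + 1 : ℕ) : ℤ) + 1 - ((m : ℤ) + 2)) = (m : ℤ) + 1 by push_cast; ring] at this
    exact this
  have h3 : Fsum (m : ℤ) (m + 1) = Fsum (m : ℤ) m := by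
    have := Fsum_pascal (m : ℤ) m
    have hv : Fsum ((m : ℤ) - 2) m = 0 := Fsum_vanish m
    rw [hv] at this
    omega
  rw [h1, h2, h3]

lemma Fsum_zero : Fsum 0 0 = 1 := by
  rw [Fsum_eq_sum 0 0 (-1) 0 (by norm_num) (by norm_num)]
  decide

lemma Fsum_one : Fsum 1 1 = 1 := by
  rw [Fsum_eq_sum 1 1 (-1) 1 (by norm_num) (by norm_num)]
  decide

lemma fib_eq_Fsum : ∀ m : ℕ, (Nat.fib (m + 1) : ℤ) = Fsum (m : ℤ) m := by
  intro m
  induction m using Nat.twoStepInduction with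
  | zero => simpa using Fsum_zero.symm
  | one => simpa using Fsum_one.symm
  | more n ih1 ih2 =>
    rw [show ((n + 2 : ℕ) : ℤ) = (n : ℤ) + 2 by push_cast; ring, Fsum_rec n,
      show (n : ℤ) + 1 = ((n + 1 : ℕ) : ℤ) by push_cast; ring, ← ih1, ← ih2]
    rw [Nat.fib_add_two]
    push_cast; ring

/-- Andrews' identity (1):
`F_n = Σ_{k ∈ ℤ} (-1)^k C(n-1, ⌊(n-1-5k)/2⌋)` for `n ≥ 1`. -/
theorem andrews_identity_one (n : ℕ) (hn : 1 ≤ n) :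
    (Nat.fib n : ℤ) =
      ∑ᶠ k : ℤ, (-1 : ℤ) ^ k.natAbs * icho (n - 1) (((n : ℤ) - 1 - 5 * k).fdiv 2) := by
  obtain ⟨m, rfl⟩ : ∃ m, n = m + 1 := ⟨n - 1, by omega⟩
  have h1 : ((m + 1 : ℕ) : ℤ) - 1 = (m : ℤ) := by push_cast; ring
  have h2 : m + 1 - 1 = m := by omega
  rw [fib_eq_Fsum m]
  unfold Fsum
  simp_rw [h1, h2]
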